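/- Let h : Ē → ℝ be bounded with h(∂) := 0, let T ∈ ℝ₊, and let ℓ⁺, ℓ⁻ ≥ 0. Define k⁺(t,j) := 1_{[0,T]}(t)·𝔼_{t,j}[h(X_T)] for (t,j) ∈ ℝ₊ × E₊ and k⁻(t,j) := 1_{[0,T]}(t)·𝔼_{t,j}[h(X_T)] for (t,j) ∈ ℝ₊ × E₋ (with k^±(∞,∂) := 0). Then for every (s,i) ∈ ℝ₊ × E, 𝔼_{s,i}[h(X_T)·1_{{τ_{ℓ⁻}⁻(s) ∧ τ_{ℓ⁺}⁺(s) ≤ T}}] = (Ξ⁺_{ℓ⁻,ℓ⁺} k⁺)(s,i) + (Ξ⁻_{ℓ⁻,ℓ⁺} k⁻)(s,i). -/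

import Mathlib

open MeasureTheory Set Filter
open scoped ENNReal

noncomputable section

/-- The extended state space `Ē = E ∪ {∂}`, with `none` playing the role of the coffin state. -/
instance optionMeasurableSpace {E : Type*} : MeasurableSpace (Option E) := ⊤

/-- The canonical path space: `Ē`-valued functions of time. -/
abbrev CPath (E : Type*) := ℝ → Option E

/-- The state of the path at an extended time, with `X_∞ := ∂`. -/
def Xat {E : Type*} (t : ℝ≥0∞) (ω : CPath E) : Option E :=
  if t = ∞ then none else ω t.toReal

/-- The additive functional `φ_t(s) = ∫_s^t v(X_u) du`. -/
def phi {E : Type*} (v : Option E → ℝ) (s t : ℝ) (ω : CPath E) : ℝ :=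
  ∫ u in s..t, v (ω u)

/-- The first passage time `τ_ℓ⁺(s) = inf {t ∈ [s,∞] : φ_t(s) > ℓ}` (with `inf ∅ = ∞`). -/
def tauP {E : Type*} (v : Option E → ℝ) (s ℓ : ℝ) (ω : CPath E) : ℝ≥0∞ :=
  sInf {t : ℝ≥0∞ | ∃ u : ℝ, s ≤ u ∧ t = ENNReal.ofReal u ∧ ℓ < phi v s u ω}

/-- The first passage time `τ_ℓ⁻(s) = inf {t ∈ [s,∞] : φ_t(s) < -ℓ}` (with `inf ∅ = ∞`). -/
def tauM {E : Type*} (v : Option E → ℝ) (s ℓ : ℝ) (ω : CPath E) : ℝ≥0∞ :=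
  sInf {t : ℝ≥0∞ | ∃ u : ℝ, s ≤ u ∧ t = ENNReal.ofReal u ∧ phi v s u ω < -ℓ}

/-- `ξ⁺_{ℓ⁻,ℓ⁺}(s)`: equals `τ_{ℓ⁺}⁺(s)` if it is strictly smaller than `τ_{ℓ⁻}⁻(s)`, else `∞`. -/
def xiP {E : Type*} (v : Option E → ℝ) (ℓm ℓp s : ℝ) (ω : CPath E) : ℝ≥0∞ :=
  if tauP v s ℓp ω < tauM v s ℓm ω then tauP v s ℓp ω else ∞

/-- `ξ⁻_{ℓ⁻,ℓ⁺}(s)`: equals `τ_{ℓ⁻}⁻(s)` if it is strictly smaller than `τ_{ℓ⁺}⁺(s)`, else `∞`. -/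
def xiM {E : Type*} (v : Option E → ℝ) (ℓm ℓp s : ℝ) (ω : CPath E) : ℝ≥0∞ :=
  if tauM v s ℓm ω < tauP v s ℓp ω then tauM v s ℓm ω else ∞

/-- Membership in `B_b(X̄₊)`: bounded measurable functions on
`X̄₊ = (ℝ₊ × E₊) ∪ {(∞,∂)}` vanishing at `(∞,∂)`, encoded as functions on
`[0,∞] × Ē` vanishing off `ℝ₊ × E₊` (in particular at `(∞,∂)`). -/
def MemBbP {E : Type*} (v : Option E → ℝ) (g : ℝ≥0∞ → Option E → ℝ) : Prop :=
  (∀ j, Measurable fun t => g t j) ∧ (∃ C, ∀ t j, |g t j| ≤ C) ∧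
    (∀ t, g t none = 0) ∧
    (∀ (t : ℝ≥0∞) (e : E), ¬(0 < v (some e) ∧ t ≠ ∞) → g t (some e) = 0)

/-- Membership in `B_b(X̄₋)`. -/
def MemBbM {E : Type*} (v : Option E → ℝ) (g : ℝ≥0∞ → Option E → ℝ) : Prop :=
  (∀ j, Measurable fun t => g t j) ∧ (∃ C, ∀ t j, |g t j| ≤ C) ∧
    (∀ t, g t none = 0) ∧
    (∀ (t : ℝ≥0∞) (e : E), ¬(v (some e) < 0 ∧ t ≠ ∞) → g t (some e) = 0)

/-- `g` decays exponentially fast to zero: `|g(s,i)| ≤ C e^{-c s}` for some `C, c > 0`. -/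
def DecaysExp {E : Type*} (g : ℝ≥0∞ → Option E → ℝ) : Prop :=
  ∃ C c : ℝ, 0 < C ∧ 0 < c ∧
    ∀ (t : ℝ≥0∞) (j : Option E), t ≠ ∞ → |g t j| ≤ C * Real.exp (-c * t.toReal)

/-- Generic expectation operator `(s,i) ↦ 𝔼_{s,i}[g(σ(s), X_{σ(s)})]` associated with a family of
random times `σ(s)`, as an operator on functions of `(t,j) ∈ [0,∞] × Ē` (value `0` at `t = ∞`). -/
def applyAt {E : Type*} (P : ℝ → Option E → Measure (CPath E)) (σ : ℝ → CPath E → ℝ≥0∞)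
    (g : ℝ≥0∞ → Option E → ℝ) : ℝ≥0∞ → Option E → ℝ :=
  fun t j =>
    if t = ∞ then 0
    else ∫ ω, g (σ t.toReal ω) (Xat (σ t.toReal ω) ω) ∂ P t.toReal j

/-- Restriction of a function on `[0,∞] × Ē` to `X̄₊` (zero off `ℝ₊ × E₊`). -/
def restrP {E : Type*} (v : Option E → ℝ) (g : ℝ≥0∞ → Option E → ℝ) :
    ℝ≥0∞ → Option E → ℝ :=
  fun t j =>
    match j with
    | none => 0
    | some e => if 0 < v (some e) ∧ t ≠ ∞ then g t (some e) else 0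

/-- Restriction of a function on `[0,∞] × Ē` to `X̄₋` (zero off `ℝ₊ × E₋`). -/
def restrM {E : Type*} (v : Option E → ℝ) (g : ℝ≥0∞ → Option E → ℝ) :
    ℝ≥0∞ → Option E → ℝ :=
  fun t j =>
    match j with
    | none => 0
    | some e => if v (some e) < 0 ∧ t ≠ ∞ then g t (some e) else 0

/-- The operator `𝒫_ℓ⁺ : B_b(X̄₊) → B_b(X̄₊)`, `(𝒫_ℓ⁺ g)(s,i) = 𝔼_{s,i}[g(τ_ℓ⁺(s), X_{τ_ℓ⁺(s)})]`. -/
def opP {E : Type*} (P : ℝ → Option E → Measure (CPath E)) (v : Option E → ℝ) (ℓ : ℝ)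
    (g : ℝ≥0∞ → Option E → ℝ) : ℝ≥0∞ → Option E → ℝ :=
  restrP v (applyAt P (fun s => tauP v s ℓ) g)

/-- The operator `J⁺ : B_b(X̄₊) → B_b(X̄₋)`, `(J⁺ g)(s,i) = 𝔼_{s,i}[g(τ₀⁺(s), X_{τ₀⁺(s)})]`. -/
def opJP {E : Type*} (P : ℝ → Option E → Measure (CPath E)) (v : Option E → ℝ)
    (g : ℝ≥0∞ → Option E → ℝ) : ℝ≥0∞ → Option E → ℝ :=
  restrM v (applyAt P (fun s => tauP v s 0) g)

/-- The operator `𝒫_ℓ⁻ : B_b(X̄₋) → B_b(X̄₋)`. -/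
def opM {E : Type*} (P : ℝ → Option E → Measure (CPath E)) (v : Option E → ℝ) (ℓ : ℝ)
    (g : ℝ≥0∞ → Option E → ℝ) : ℝ≥0∞ → Option E → ℝ :=
  restrM v (applyAt P (fun s => tauM v s ℓ) g)

/-- The operator `J⁻ : B_b(X̄₋) → B_b(X̄₊)`. -/
def opJM {E : Type*} (P : ℝ → Option E → Measure (CPath E)) (v : Option E → ℝ)
    (g : ℝ≥0∞ → Option E → ℝ) : ℝ≥0∞ → Option E → ℝ :=
  restrP v (applyAt P (fun s => tauM v s 0) g)

/-- The operator `Ξ⁺_{ℓ⁻,ℓ⁺}`, `(Ξ⁺ g)(s,i) = 𝔼_{s,i}[g(ξ⁺_{ℓ⁻,ℓ⁺}(s), X_{ξ⁺_{ℓ⁻,ℓ⁺}(s)})]`. -/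
def opXiP {E : Type*} (P : ℝ → Option E → Measure (CPath E)) (v : Option E → ℝ) (ℓm ℓp : ℝ)
    (g : ℝ≥0∞ → Option E → ℝ) (s : ℝ) (j : Option E) : ℝ :=
  ∫ ω, g (xiP v ℓm ℓp s ω) (Xat (xiP v ℓm ℓp s ω) ω) ∂ P s j

/-- The operator `Ξ⁻_{ℓ⁻,ℓ⁺}`. -/
def opXiM {E : Type*} (P : ℝ → Option E → Measure (CPath E)) (v : Option E → ℝ) (ℓm ℓp : ℝ)
    (g : ℝ≥0∞ → Option E → ℝ) (s : ℝ) (j : Option E) : ℝ :=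
  ∫ ω, g (xiM v ℓm ℓp s ω) (Xat (xiM v ℓm ℓp s ω) ω) ∂ P s j

/-- The raw σ-field `σ(X_u, u ∈ [s,r])` on path space. -/
def natF {E : Type*} (s r : ℝ) : MeasurableSpace (CPath E) :=
  ⨆ u ∈ Set.Icc s r, MeasurableSpace.comap (fun ω : CPath E => ω u) ⊤

/-- The right-continuous filtration `F^s_t = ⋂_{r > t} σ(X_u, u ∈ [s,r])`,
indexed by extended times, with `F^s_∞ = σ(X_u, u ≥ s)`. -/
def Fst {E : Type*} (s : ℝ) (t : ℝ≥0∞) : MeasurableSpace (CPath E) :=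
  if t = ∞ then ⨆ u ∈ Set.Ici s, MeasurableSpace.comap (fun ω : CPath E => ω u) ⊤
  else ⨅ r ∈ Set.Ioi t.toReal, natF s r

/-- `τ` is an `𝔽ₛ`-stopping time. -/
def IsST {E : Type*} (s : ℝ) (τ : CPath E → ℝ≥0∞) : Prop :=
  ∀ t : ℝ≥0∞, MeasurableSet[Fst s t] {ω | τ ω ≤ t}

/-- The σ-field `F^s_τ` at an `𝔽ₛ`-stopping time `τ`. -/
def stoppedSigma {E : Type*} (s : ℝ) (τ : CPath E → ℝ≥0∞) (hτ : IsST s τ) :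
    MeasurableSpace (CPath E) where
  MeasurableSet' A := ∀ t : ℝ≥0∞, MeasurableSet[Fst s t] (A ∩ {ω | τ ω ≤ t})
  measurableSet_empty := fun t => by
    simpa using (MeasurableSet.empty : MeasurableSet[Fst s t] (∅ : Set (CPath E)))
  measurableSet_compl := fun A hA t => by
    have h1 : Aᶜ ∩ {ω | τ ω ≤ t} = {ω | τ ω ≤ t} \ (A ∩ {ω | τ ω ≤ t}) := by
      ext ω
      simp only [Set.mem_inter_iff, Set.mem_compl_iff, Set.mem_diff, Set.mem_setOf_eq]
      tauto
    rw [h1]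
    exact MeasurableSet.diff (hτ t) (hA t)
  measurableSet_iUnion := fun f hf t => by
    rw [Set.iUnion_inter]
    exact MeasurableSet.iUnion fun n => hf n t

/-- A canonical time-inhomogeneous Markov family on `Ē`, with right-continuous sample paths,
absorbing coffin state, initial condition `ℙ_{s,i}(X_s = i) = 1` and the strong Markov property
with respect to the right-continuous filtrations `𝔽ₛ`. -/
structure MarkovFamily (E : Type*) (v : Option E → ℝ) where
  /-- The family of probability measures `ℙ_{s,i}` on canonical path space. -/
  P : ℝ → Option E → Measure (CPath E)
  prob : ∀ s j, IsProbabilityMeasure (P s j)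
  init : ∀ (s : ℝ) (j : Option E), 0 ≤ s → P s j {ω | ω s = j} = 1
  pathReg : ∀ (s : ℝ) (j : Option E), 0 ≤ s → ∀ᵐ ω ∂ P s j,
    (∀ t, s ≤ t → ∃ ε > 0, ∀ u ∈ Set.Ico t (t + ε), ω u = ω t) ∧
    (∀ t, s ≤ t → ω t = none → ∀ u, t ≤ u → ω u = none)
  strongMarkov : ∀ (s : ℝ) (j : Option E), 0 ≤ s →
    ∀ (τ : CPath E → ℝ≥0∞) (hτ : IsST s τ), (∀ ω, ENNReal.ofReal s ≤ τ ω) →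
    ∀ G : ℝ≥0∞ → CPath E → ℝ, Measurable (Function.uncurry G) →
      (∃ C, ∀ t ω, |G t ω| ≤ C) →
      (∀ (t : ℝ) (ω ω' : CPath E), (∀ u, t ≤ u → ω u = ω' u) →
        G (ENNReal.ofReal t) ω = G (ENNReal.ofReal t) ω') →
      (P s j)[fun ω => Set.indicator {ω' : CPath E | τ ω' ≠ ∞}
          (fun ω' => G (τ ω') ω') ω | stoppedSigma s τ hτ]
        =ᵐ[P s j]
      fun ω => Set.indicator {ω' : CPath E | τ ω' ≠ ∞}
          (fun ω' => ∫ ω'', G (τ ω') ω'' ∂ P (τ ω').toReal (ω' (τ ω').toReal)) ω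

/-- The first jump time `γ(s) = inf {t ≥ s : X_t ≠ X_s}`. -/
def gammaJump {E : Type*} (s : ℝ) (ω : CPath E) : ℝ≥0∞ :=
  sInf {t : ℝ≥0∞ | ∃ u : ℝ, s ≤ u ∧ t = ENNReal.ofReal u ∧ ω u ≠ ω s}

/-- Assumption on the sub-Markovian generator matrices `(Λ_s)`: entries uniformly bounded by `K`,
nonnegative off-diagonal entries, nonpositive row sums, and the law of the first jump time is
`ℙ_{s,i}(γ(s) ≤ T) = 1 - exp(∫_s^T Λ_u(i,i) du)`. -/
structure GenAssumption (E : Type*) [Fintype E] (v : Option E → ℝ)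
    (M : MarkovFamily E v) (K : ℝ) where
  hK : 0 < K
  Lam : ℝ → E → E → ℝ
  bdd : ∀ s i j, |Lam s i j| ≤ K
  offDiag : ∀ s i j, i ≠ j → 0 ≤ Lam s i j
  rowSum : ∀ s i, ∑ j, Lam s i j ≤ 0
  jumpLaw : ∀ (s T : ℝ) (i : E), 0 ≤ s → s ≤ T →
    (M.P s (some i) {ω | gammaJump s ω ≤ ENNReal.ofReal T}).toReal
      = 1 - Real.exp (∫ u in s..T, Lam u i i)

end

/-- The function `k(t,j) = 1_{[0,T]}(t) 𝔼_{t,j}[h(X_T)]` of Proposition 3.4. -/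
noncomputable def kFun {E : Type*} (P : ℝ → Option E → Measure (CPath E))
    (h : Option E → ℝ) (T : ℝ) : ℝ≥0∞ → Option E → ℝ :=
  fun t j => if t ≠ ∞ ∧ t.toReal ≤ T then ∫ ω, h (ω T) ∂ P t.toReal j else 0

section LawBeforeExitAux

noncomputable section

variable {E : Type*}

/-! ### Generalities about the coffin-extended state space -/

lemma measurableSet_option' (s : Set (Option E)) : MeasurableSet s :=
  MeasurableSpace.measurableSet_top

lemma measurable_of_option {β : Type*} [MeasurableSpace β] (f : Option E → β) : Measurable f :=
  fun _ _ => measurableSet_option' _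

instance : MeasurableSingletonClass (Option E) := ⟨fun _ => measurableSet_option' _⟩

/-! ### The natural filtration -/

lemma natF_le_pi (s r : ℝ) : (natF s r : MeasurableSpace (CPath E)) ≤ MeasurableSpace.pi :=
  iSup₂_le fun u _ => (measurable_pi_apply u).comap_le

lemma Fst_le_pi (s : ℝ) (t : ℝ≥0∞) : (Fst s t : MeasurableSpace (CPath E)) ≤ MeasurableSpace.pi := by
  rw [Fst]
  split_ifs
  · exact iSup₂_le fun u _ => (measurable_pi_apply u).comap_le
  · exact le_trans (iInf₂_le (t.toReal + 1) (lt_add_one t.toReal)) (natF_le_pi _ _)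

lemma measurable_eval_natF {s r c : ℝ} (hc : c ∈ Set.Icc s r) :
    Measurable[natF (E := E) s r] fun ω : CPath E => ω c :=
  Measurable.of_comap_le (le_biSup
    (f := fun u => MeasurableSpace.comap (fun ω : CPath E => ω u) (⊤ : MeasurableSpace (Option E))) hc)

lemma stoppedSigma_le_pi {s : ℝ} {τ : CPath E → ℝ≥0∞} (hτ : IsST s τ) :
    stoppedSigma s τ hτ ≤ MeasurableSpace.pi := by
  intro A hA
  have h1 := hA ∞
  have h2 : {ω : CPath E | τ ω ≤ ∞} = Set.univ :=
    Set.eq_univ_of_forall fun ω => (le_top : τ ω ≤ ⊤)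
  rw [h2, Set.inter_univ] at h1
  exact Fst_le_pi s ∞ _ h1

/-! ### Dyadic sampling -/

def dn (n : ℕ) (r : ℝ) : ℝ := (⌈r * 2 ^ n⌉ : ℤ) / 2 ^ n

lemma le_dn (n : ℕ) (r : ℝ) : r ≤ dn n r := by
  rw [dn, le_div_iff₀ (by positivity)]
  exact Int.le_ceil _

lemma dn_lt (n : ℕ) (r : ℝ) : dn n r < r + ((2:ℝ) ^ n)⁻¹ := by
  have h2 : (0:ℝ) < 2 ^ n := by positivity
  rw [dn, div_lt_iff₀ h2, add_mul, inv_mul_cancel₀ h2.ne']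
  exact Int.ceil_lt_add_one _

/-- Regular (right-locally-constant) paths. -/
def Reg (s : ℝ) (ω : CPath E) : Prop :=
  ∀ t, s ≤ t → ∃ ε > 0, ∀ u ∈ Set.Ico t (t + ε), ω u = ω t

/-- Dyadic approximations of the additive functional. -/
def Snn (w : Option E → ℝ) (s : ℝ) (n : ℕ) (q : ℝ) (ω : CPath E) : ℝ :=
  ∫ r in s..q, w (ω (max (dn n r) s))

lemma measurable_Snn_integrand (w : Option E → ℝ) (ω : CPath E) (s : ℝ) (n : ℕ) :
    Measurable fun r : ℝ => w (ω (max (dn n r) s)) := by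
  have h1 : Measurable fun r : ℝ => (⌈r * 2 ^ n⌉ : ℤ) :=
    Int.measurable_ceil.comp (measurable_id.mul_const _)
  have h0 : (fun r : ℝ => w (ω (max (dn n r) s))) =
      (fun k : ℤ => w (ω (max ((k : ℝ) / 2 ^ n) s))) ∘ (fun r : ℝ => ⌈r * 2 ^ n⌉) := rfl
  rw [h0]
  exact (measurable_of_countable
    (fun k : ℤ => w (ω (max ((k : ℝ) / 2 ^ n) s)))).comp h1

lemma measurable_regularized (w : Option E → ℝ) {s : ℝ} {ω : CPath E} (hreg : Reg s ω) :
    Measurable fun r : ℝ => w (ω (max r s)) := by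
  apply measurable_of_tendsto_metrizable
    (f := fun n (r : ℝ) => w (ω (max (dn n (max r s)) s)))
  · intro n
    have h1 : Measurable fun r : ℝ => (⌈(max r s) * 2 ^ n⌉ : ℤ) :=
      Int.measurable_ceil.comp ((measurable_id.max measurable_const).mul_const _)
    have h0 : (fun r : ℝ => w (ω (max (dn n (max r s)) s))) =
        (fun k : ℤ => w (ω (max ((k : ℝ) / 2 ^ n) s))) ∘ (fun r : ℝ => ⌈(max r s) * 2 ^ n⌉) := rfl
    rw [h0]
    exact (measurable_of_countable
      (fun k : ℤ => w (ω (max ((k : ℝ) / 2 ^ n) s)))).comp h1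
  · rw [tendsto_pi_nhds]
    intro r
    obtain ⟨ε, hε, hconst⟩ := hreg (max r s) (le_max_right _ _)
    have h2 : Tendsto (fun n : ℕ => ((2:ℝ) ^ n)⁻¹) atTop (nhds 0) := by
      simp only [← inv_pow]
      exact tendsto_pow_atTop_nhds_zero_of_lt_one (by norm_num) (by norm_num)
    apply Tendsto.congr' _ tendsto_const_nhds
    filter_upwards [h2.eventually (gt_mem_nhds hε)] with n hn
    have hd1 : max r s ≤ dn n (max r s) := le_dn _ _
    have hd2 : dn n (max r s) < max r s + ε := lt_of_lt_of_le (dn_lt _ _) (by linarith)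
    rw [max_eq_left (le_trans (le_max_right r s) hd1)]
    exact congrArg w (hconst _ ⟨hd1, hd2⟩).symm

lemma abs_Snn_integrand_le {w : Option E → ℝ} {W : ℝ} (hW : ∀ j, |w j| ≤ W)
    (ω : CPath E) (s : ℝ) (n : ℕ) (r : ℝ) : |w (ω (max (dn n r) s))| ≤ W := hW _

lemma W_nonneg {w : Option E → ℝ} {W : ℝ} (hW : ∀ j, |w j| ≤ W) : 0 ≤ W :=
  le_trans (abs_nonneg _) (hW none)

/-- Convergence of the dyadic approximations on regular paths. -/
lemma Snn_tendsto {w : Option E → ℝ} {W : ℝ} (hW : ∀ j, |w j| ≤ W) {s q : ℝ} (hsq : s ≤ q)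
    {ω : CPath E} (hreg : Reg s ω) :
    Tendsto (fun n => Snn w s n q ω) atTop (nhds (∫ r in s..q, w (ω r))) := by
  apply intervalIntegral.tendsto_integral_filter_of_dominated_convergence (fun _ => W)
  · exact Eventually.of_forall fun n => (measurable_Snn_integrand w ω s n).aestronglyMeasurable
  · exact Eventually.of_forall fun n => MeasureTheory.ae_of_all _ fun r _ => by
      simpa [Real.norm_eq_abs] using hW (ω (max (dn n r) s))
  · exact intervalIntegrable_const
  · refine MeasureTheory.ae_of_all _ fun r hr => ?_
    rw [Set.uIoc_of_le hsq] at hr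
    obtain ⟨ε, hε, hconst⟩ := hreg r hr.1.le
    have h2 : Tendsto (fun n : ℕ => ((2:ℝ) ^ n)⁻¹) atTop (nhds 0) := by
      simp only [← inv_pow]
      exact tendsto_pow_atTop_nhds_zero_of_lt_one (by norm_num) (by norm_num)
    apply Tendsto.congr' _ tendsto_const_nhds
    filter_upwards [h2.eventually (gt_mem_nhds hε)] with n hn
    have hd1 : r ≤ dn n r := le_dn _ _
    have hd2 : dn n r < r + ε := lt_of_lt_of_le (dn_lt _ _) (by linarith)
    rw [max_eq_left (le_trans hr.1.le hd1)]
    exact congrArg w (hconst _ ⟨hd1, hd2⟩).symm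

/-- `Snn` is measurable with respect to the natural σ-field up to time `r`,
provided `n` is large enough. -/
lemma Snn_measurable [Fintype E] {w : Option E → ℝ} {s q r : ℝ} {n : ℕ}
    (hsq : s ≤ q) (hqr : q + ((2:ℝ) ^ n)⁻¹ ≤ r) :
    Measurable[natF (E := E) s r] fun ω => Snn w s n q ω := by
  classical
  have h2 : (0:ℝ) < 2 ^ n := by positivity
  have hsr : s ≤ r := le_trans hsq (le_trans (le_add_of_nonneg_right (by positivity)) hqr)
  set K : Finset ℤ := Finset.Icc ⌈s * 2 ^ n⌉ ⌈q * 2 ^ n⌉ with hK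
  set c : ℤ → ℝ := fun k => max (min ((k : ℝ) / 2 ^ n) r) s with hc
  have hcmem : ∀ k, c k ∈ Set.Icc s r := fun k => ⟨le_max_right _ _, max_le (min_le_right _ _) hsr⟩
  set F : ({k : ℤ // k ∈ K} → Option E) → ℝ := fun y =>
    ∫ r' in s..q, w ((fun k : ℤ => if h : k ∈ K then y ⟨k, h⟩ else none) ⌈r' * 2 ^ n⌉) with hF
  have hfact : (fun ω => Snn w s n q ω) = fun ω => F (fun k => ω (c (k : ℤ))) := by
    funext ω
    refine intervalIntegral.integral_congr fun r' hr' => ?_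
    rw [Set.uIcc_of_le hsq] at hr'
    have hk1 : ⌈s * 2 ^ n⌉ ≤ ⌈r' * 2 ^ n⌉ := Int.ceil_le_ceil (mul_le_mul_of_nonneg_right hr'.1 h2.le)
    have hk2 : ⌈r' * 2 ^ n⌉ ≤ ⌈q * 2 ^ n⌉ := Int.ceil_le_ceil (mul_le_mul_of_nonneg_right hr'.2 h2.le)
    have hkK : ⌈r' * 2 ^ n⌉ ∈ K := Finset.mem_Icc.2 ⟨hk1, hk2⟩
    have hdle : dn n r' ≤ r := le_trans (dn_lt n r').le (by linarith [hr'.2])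
    have hds : s ≤ dn n r' := le_trans hr'.1 (le_dn n r')
    show w (ω (max (dn n r') s)) = _
    simp only [dif_pos hkK]
    congr 2
    rw [max_eq_left hds, hc]
    show dn n r' = max (min ((⌈r' * 2 ^ n⌉ : ℝ) / 2 ^ n) r) s
    rw [show ((⌈r' * 2 ^ n⌉ : ℤ) : ℝ) / 2 ^ n = dn n r' from rfl, min_eq_left hdle,
      max_eq_left hds]
  rw [hfact]
  letI : MeasurableSpace (CPath E) := natF (E := E) s r
  exact (measurable_of_countable F).comp
    (measurable_pi_lambda _ fun k => measurable_eval_natF (hcmem (k : ℤ)))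

/-! ### phi on regular paths -/

lemma phi_self (w : Option E → ℝ) (s : ℝ) (ω : CPath E) : phi w s s ω = 0 :=
  intervalIntegral.integral_same

lemma phi_neg (v : Option E → ℝ) (s u : ℝ) (ω : CPath E) :
    phi (fun j => -v j) s u ω = -phi v s u ω := by
  simp [phi, intervalIntegral.integral_neg]

lemma reg_intervalIntegrable {w : Option E → ℝ} {W : ℝ} (hW : ∀ j, |w j| ≤ W)
    {s : ℝ} {ω : CPath E} (hreg : Reg s ω) {a b : ℝ} (ha : s ≤ a) (hb : s ≤ b) :
    IntervalIntegrable (fun r => w (ω r)) MeasureTheory.volume a b := by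
  rw [intervalIntegrable_iff]
  have hsub : Set.uIoc a b ⊆ Set.Ici s := fun x hx =>
    le_trans (le_min ha hb) hx.1.le
  refine MeasureTheory.Integrable.mono' (g := fun _ => W)
    (MeasureTheory.integrableOn_const measure_Ioc_lt_top.ne) ?_
    (MeasureTheory.ae_of_all _ fun r => by simpa [Real.norm_eq_abs] using hW (ω r))
  have hmg := (measurable_regularized w hreg).aestronglyMeasurable
    (μ := MeasureTheory.volume.restrict (Set.uIoc a b))
  refine hmg.congr ((MeasureTheory.ae_restrict_iff' measurableSet_uIoc).2
    (MeasureTheory.ae_of_all _ fun r hr => ?_))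
  show w (ω (max r s)) = w (ω r)
  rw [max_eq_left (hsub hr)]

lemma phi_sub {w : Option E → ℝ} {W : ℝ} (hW : ∀ j, |w j| ≤ W)
    {s : ℝ} {ω : CPath E} (hreg : Reg s ω) {a b : ℝ} (ha : s ≤ a) (hb : s ≤ b) :
    phi w s b ω - phi w s a ω = ∫ r in a..b, w (ω r) := by
  have h1 := intervalIntegral.integral_add_adjacent_intervals
    (reg_intervalIntegrable hW hreg le_rfl ha) (reg_intervalIntegrable hW hreg ha hb)
  show (∫ r in s..b, w (ω r)) - (∫ r in s..a, w (ω r)) = _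
  linarith [h1]

lemma phi_lip {w : Option E → ℝ} {W : ℝ} (hW : ∀ j, |w j| ≤ W)
    {s : ℝ} {ω : CPath E} (hreg : Reg s ω) {a b : ℝ} (ha : s ≤ a) (hab : a ≤ b) :
    |phi w s b ω - phi w s a ω| ≤ W * (b - a) := by
  rw [phi_sub hW hreg ha (le_trans ha hab)]
  have hnorm := intervalIntegral.norm_integral_le_of_norm_le_const
    (C := W) (f := fun r => w (ω r)) (a := a) (b := b)
    (fun r _ => by simpa [Real.norm_eq_abs] using hW (ω r))
  rwa [Real.norm_eq_abs, abs_of_nonneg (by linarith : (0:ℝ) ≤ b - a)] at hnorm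

lemma phi_step {w : Option E → ℝ} {W : ℝ} (hW : ∀ j, |w j| ≤ W)
    {s : ℝ} {ω : CPath E} (hreg : Reg s ω) {t₀ ε u : ℝ} (ht : s ≤ t₀) (hε : 0 < ε)
    (hconst : ∀ x ∈ Set.Ico t₀ (t₀ + ε), ω x = ω t₀)
    (hu1 : t₀ ≤ u) (hu2 : u < t₀ + ε) :
    phi w s u ω = phi w s t₀ ω + w (ω t₀) * (u - t₀) := by
  have h1 : phi w s u ω - phi w s t₀ ω = ∫ r in t₀..u, w (ω r) :=
    phi_sub hW hreg ht (le_trans ht hu1)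
  have h2 : (∫ r in t₀..u, w (ω r)) = ∫ r in t₀..u, w (ω t₀) := by
    refine intervalIntegral.integral_congr fun x hx => ?_
    rw [Set.uIcc_of_le hu1] at hx
    rw [hconst x ⟨hx.1, lt_of_le_of_lt hx.2 hu2⟩]
  rw [h2, intervalIntegral.integral_const, smul_eq_mul] at h1
  linarith

/-! ### The sign of `v` at the crossing time -/

lemma tauP_lower {w : Option E → ℝ} {s ℓ : ℝ} {ω : CPath E} :
    ENNReal.ofReal s ≤ tauP w s ℓ ω := by
  refine le_sInf ?_
  rintro t ⟨u, hu, rfl, -⟩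
  exact ENNReal.ofReal_le_ofReal hu

lemma crossing_sign_pos {w : Option E → ℝ} {W : ℝ} (hW : ∀ j, |w j| ≤ W)
    {s ℓ : ℝ} (hs : 0 ≤ s) (hℓ : 0 ≤ ℓ) {ω : CPath E} (hreg : Reg s ω)
    (hne : tauP w s ℓ ω ≠ ∞) :
    s ≤ (tauP w s ℓ ω).toReal ∧ 0 < w (ω ((tauP w s ℓ ω).toReal)) := by
  have hW0 : 0 ≤ W := W_nonneg hW
  set τ := tauP w s ℓ ω with hτ
  set t₀ := τ.toReal with ht₀
  have hts : s ≤ t₀ := by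
    have h1 : ENNReal.ofReal s ≤ τ := tauP_lower
    have := ENNReal.toReal_mono hne h1
    rwa [ENNReal.toReal_ofReal hs] at this
  have hub : ∀ u, s ≤ u → ℓ < phi w s u ω → t₀ ≤ u := by
    intro u hu hphi
    have h1 : τ ≤ ENNReal.ofReal u := sInf_le ⟨u, hu, rfl, hphi⟩
    exact ENNReal.toReal_le_of_le_ofReal (le_trans hs hu) h1
  have hphilt : ∀ u, s ≤ u → u < t₀ → phi w s u ω ≤ ℓ := by
    intro u hu hut
    by_contra hcon
    push_neg at hcon
    exact absurd (hub u hu hcon) (not_le.2 hut)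
  have hphit : phi w s t₀ ω ≤ ℓ := by
    rcases eq_or_lt_of_le hts with h | h
    · rw [← h, phi_self]; exact hℓ
    · by_contra hcon
      push_neg at hcon
      set δ := (phi w s t₀ ω - ℓ) / (W + 1) with hδ
      have hδpos : 0 < δ := by
        apply div_pos <;> linarith
      set u := max s (t₀ - δ) with hu
      have hu1 : s ≤ u := le_max_left _ _
      have hu2 : u < t₀ := max_lt h (by linarith)
      have hu3 : t₀ - u ≤ δ := by
        have := le_max_right s (t₀ - δ)
        rw [hu]; linarith
      have hδeq : (W + 1) * δ = phi w s t₀ ω - ℓ := by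
        rw [hδ, mul_div_cancel₀ _ (by linarith : (W:ℝ) + 1 ≠ 0)]
      have hl1 := phi_lip hW hreg hu1 hu2.le
      have hl2 := hphilt u hu1 hu2
      have habs := abs_le.1 hl1
      have hmul : W * (t₀ - u) ≤ W * δ := mul_le_mul_of_nonneg_left hu3 hW0
      linarith [habs.2]
  have hwit : ∀ ε, 0 < ε → ∃ u, s ≤ u ∧ ℓ < phi w s u ω ∧ u < t₀ + ε := by
    intro ε hε
    have h1 : τ < ENNReal.ofReal (t₀ + ε) := by
      rw [show τ = ENNReal.ofReal t₀ from (ENNReal.ofReal_toReal hne).symm]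
      exact (ENNReal.ofReal_lt_ofReal_iff (by linarith)).2 (by linarith)
    obtain ⟨t', ⟨u, hu, rfl, hphi⟩, hlt⟩ := sInf_lt_iff.1 h1
    exact ⟨u, hu, hphi, (ENNReal.ofReal_lt_ofReal_iff (by linarith)).1 hlt⟩
  obtain ⟨ε₀, hε₀, hconst⟩ := hreg t₀ hts
  obtain ⟨u, hu, hphiu, hult⟩ := hwit ε₀ hε₀
  have h1 : t₀ ≤ u := hub u hu hphiu
  have h2 : t₀ < u := by
    rcases eq_or_lt_of_le h1 with hh | hh
    · exfalso; rw [← hh] at hphiu; exact absurd hphiu (not_lt.2 hphit)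
    · exact hh
  have hstep := phi_step hW hreg hts hε₀ hconst h1 hult
  refine ⟨hts, ?_⟩
  have hprod : 0 < w (ω t₀) * (u - t₀) := by linarith
  by_contra hwn
  push_neg at hwn
  nlinarith

/-! ### Rationalized crossing events and hitting times -/

def EvU (w : Option E → ℝ) (s ℓ q : ℝ) : Set (CPath E) :=
  {ω | ∃ m : ℕ, ∀ᶠ n in Filter.atTop, ℓ + 1 / ((m : ℝ) + 1) < Snn w s n q ω}

lemma EvU_iff {w : Option E → ℝ} {W : ℝ} (hW : ∀ j, |w j| ≤ W) {s ℓ q : ℝ}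
    (hsq : s ≤ q) {ω : CPath E} (hreg : Reg s ω) :
    ω ∈ EvU w s ℓ q ↔ ℓ < phi w s q ω := by
  have hT : Tendsto (fun n => Snn w s n q ω) Filter.atTop (nhds (phi w s q ω)) :=
    Snn_tendsto hW hsq hreg
  constructor
  · rintro ⟨m, hm⟩
    have h1 : ℓ + 1 / ((m : ℝ) + 1) ≤ phi w s q ω :=
      ge_of_tendsto hT (hm.mono fun n hn => hn.le)
    have h2 : 0 < 1 / ((m : ℝ) + 1) := by positivity
    linarith
  · intro hlt
    obtain ⟨m, hm⟩ := exists_nat_one_div_lt (show 0 < phi w s q ω - ℓ by linarith)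
    exact ⟨m, hT.eventually (eventually_gt_nhds (by linarith))⟩

lemma EvU_measurable [Fintype E] {w : Option E → ℝ} {s ℓ q r : ℝ}
    (hsq : s ≤ q) (hqr : q < r) :
    MeasurableSet[natF (E := E) s r] (EvU w s ℓ q) := by
  obtain ⟨N₀, hN₀⟩ : ∃ N₀ : ℕ, q + ((2:ℝ) ^ N₀)⁻¹ ≤ r := by
    obtain ⟨N₀, hN₀⟩ := pow_unbounded_of_one_lt ((r - q)⁻¹) (one_lt_two (α := ℝ))
    refine ⟨N₀, ?_⟩
    have h1 : (0:ℝ) < r - q := by linarith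
    have h2 : ((2:ℝ) ^ N₀)⁻¹ < r - q := by
      rw [inv_lt_comm₀ (by positivity) h1] at *
      · exact hN₀
    linarith
  have hmono : ∀ n, N₀ ≤ n → q + ((2:ℝ) ^ n)⁻¹ ≤ r := by
    intro n hn
    have : ((2:ℝ) ^ n)⁻¹ ≤ ((2:ℝ) ^ N₀)⁻¹ := by
      apply inv_anti₀ (by positivity)
      exact pow_le_pow_right₀ (by norm_num) hn
    linarith
  have hset : EvU (E := E) w s ℓ q = ⋃ m : ℕ, ⋃ N : ℕ, ⋂ n : ℕ, ⋂ (_ : N + N₀ ≤ n),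
      {ω : CPath E | ℓ + 1 / ((m : ℝ) + 1) < Snn w s n q ω} := by
    ext ω
    simp only [EvU, Set.mem_setOf_eq, Set.mem_iUnion, Set.mem_iInter, Filter.eventually_atTop]
    constructor
    · rintro ⟨m, N, hN⟩
      exact ⟨m, N, fun n hn => hN n (le_trans (Nat.le_add_right _ _) hn)⟩
    · rintro ⟨m, N, hN⟩
      exact ⟨m, N + N₀, hN⟩
  rw [hset]
  refine MeasurableSet.iUnion fun m => MeasurableSet.iUnion fun N =>
    MeasurableSet.iInter fun n => MeasurableSet.iInter fun hn => ?_
  have hmeas := Snn_measurable (E := E) (w := w) hsq (hmono n (le_trans (Nat.le_add_left _ _) hn))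
  exact measurableSet_lt measurable_const hmeas

def tauHat (w : Option E → ℝ) (s ℓ : ℝ) (ω : CPath E) : ℝ≥0∞ :=
  sInf {t | ∃ q : ℚ, s ≤ (q : ℝ) ∧ t = ENNReal.ofReal (q : ℝ) ∧ ω ∈ EvU w s ℓ (q : ℝ)}

lemma tauHat_lower {w : Option E → ℝ} {s ℓ : ℝ} {ω : CPath E} :
    ENNReal.ofReal s ≤ tauHat w s ℓ ω := by
  refine le_sInf ?_
  rintro t ⟨q, hq, rfl, -⟩
  exact ENNReal.ofReal_le_ofReal hq

lemma tauHat_lt_iff {w : Option E → ℝ} {s ℓ : ℝ} {ω : CPath E} {b : ℝ≥0∞} :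
    tauHat w s ℓ ω < b ↔
      ∃ q : ℚ, s ≤ (q : ℝ) ∧ ENNReal.ofReal (q : ℝ) < b ∧ ω ∈ EvU w s ℓ (q : ℝ) := by
  rw [tauHat, sInf_lt_iff]
  constructor
  · rintro ⟨t, ⟨q, h1, rfl, h3⟩, h4⟩
    exact ⟨q, h1, h4, h3⟩
  · rintro ⟨q, h1, h2, h3⟩
    exact ⟨_, ⟨q, h1, rfl, h3⟩, h2⟩

lemma tauHat_eq {w : Option E → ℝ} {W : ℝ} (hW : ∀ j, |w j| ≤ W) {s ℓ : ℝ}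
    (hs : 0 ≤ s) (hℓ : 0 ≤ ℓ) {ω : CPath E} (hreg : Reg s ω) :
    tauHat w s ℓ ω = tauP w s ℓ ω := by
  have hW0 : 0 ≤ W := W_nonneg hW
  apply le_antisymm
  · refine le_sInf ?_
    rintro t ⟨u, hsu, rfl, hphi⟩
    have hus : s < u := by
      rcases eq_or_lt_of_le hsu with hh | hh
      · exfalso; rw [← hh, phi_self] at hphi; exact absurd hphi (not_lt.2 hℓ)
      · exact hh
    set δ := (phi w s u ω - ℓ) / (W + 1) with hδ
    have hδpos : 0 < δ := by apply div_pos <;> linarith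
    obtain ⟨q, hq1, hq2⟩ := exists_rat_btwn (show max s (u - δ) < u from max_lt hus (by linarith))
    have hsq : s ≤ (q : ℝ) := le_of_lt (lt_of_le_of_lt (le_max_left _ _) hq1)
    have huq : u - (q : ℝ) ≤ δ := by
      have := le_max_right s (u - δ)
      have h3 : u - δ < (q : ℝ) := lt_of_le_of_lt (le_max_right s (u - δ)) hq1
      linarith
    have hphiq : ℓ < phi w s (q : ℝ) ω := by
      have hδeq : (W + 1) * δ = phi w s u ω - ℓ := by
        rw [hδ, mul_div_cancel₀ _ (by linarith : (W:ℝ) + 1 ≠ 0)]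
      have hlip := phi_lip hW hreg hsq hq2.le
      have habs := abs_le.1 hlip
      have hmul : W * (u - (q:ℝ)) ≤ W * δ := mul_le_mul_of_nonneg_left huq hW0
      linarith [habs.1]
    exact le_trans (sInf_le ⟨q, hsq, rfl, (EvU_iff hW hsq hreg).2 hphiq⟩)
      (ENNReal.ofReal_le_ofReal hq2.le)
  · refine le_sInf ?_
    rintro t ⟨q, hsq, rfl, hEv⟩
    exact sInf_le ⟨(q : ℝ), hsq, rfl, (EvU_iff hW hsq hreg).1 hEv⟩

/-! ### The candidate exit times and their stopping time property -/

def xiHat (w₁ w₂ : Option E → ℝ) (s ℓ₁ ℓ₂ : ℝ) (ω : CPath E) : ℝ≥0∞ :=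
  if tauHat w₁ s ℓ₁ ω < tauHat w₂ s ℓ₂ ω then tauHat w₁ s ℓ₁ ω else ∞

lemma xiHat_lower (w₁ w₂ : Option E → ℝ) (s ℓ₁ ℓ₂ : ℝ) (ω : CPath E) :
    ENNReal.ofReal s ≤ xiHat w₁ w₂ s ℓ₁ ℓ₂ ω := by
  rw [xiHat]
  split_ifs
  · exact tauHat_lower
  · exact le_top

lemma xiHat_isST [Fintype E] (w₁ w₂ : Option E → ℝ) {s : ℝ} (hs : 0 ≤ s) (ℓ₁ ℓ₂ : ℝ) :
    IsST s (xiHat (E := E) w₁ w₂ s ℓ₁ ℓ₂) := by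
  intro t
  by_cases ht : t = ∞
  · subst ht
    have huniv : {ω : CPath E | xiHat w₁ w₂ s ℓ₁ ℓ₂ ω ≤ ∞} = Set.univ :=
      Set.eq_univ_of_forall fun ω => (le_top : xiHat w₁ w₂ s ℓ₁ ℓ₂ ω ≤ ⊤)
    rw [huniv]
    exact MeasurableSet.univ
  · rw [Fst, if_neg ht, MeasurableSpace.measurableSet_iInf]
    intro r
    rw [MeasurableSpace.measurableSet_iInf]
    intro hr
    rw [Set.mem_Ioi] at hr
    -- notation
    set Ta := fun ω : CPath E => tauHat w₁ s ℓ₁ ω with hTa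
    set Tb := fun ω : CPath E => tauHat w₂ s ℓ₂ ω with hTb
    -- Step C
    have hC : ∀ q : ℚ, 0 ≤ (q : ℝ) → (q : ℝ) < r →
        {ω : CPath E | Tb ω ≤ ENNReal.ofReal (q : ℝ)} =
        ⋂ (r'' : ℚ) (_ : (q : ℝ) < (r'' : ℝ)) (_ : (r'' : ℝ) < r),
          ⋃ (q' : ℚ) (_ : s ≤ (q' : ℝ)) (_ : (q' : ℝ) < (r'' : ℝ)),
            EvU w₂ s ℓ₂ (q' : ℝ) := by
      intro q hq hqr
      ext ω
      simp only [Set.mem_setOf_eq, Set.mem_iInter, Set.mem_iUnion]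
      constructor
      · intro h r'' h1 h2
        have hlt : Tb ω < ENNReal.ofReal (r'' : ℝ) :=
          lt_of_le_of_lt h ((ENNReal.ofReal_lt_ofReal_iff (lt_of_le_of_lt hq h1)).2 h1)
        obtain ⟨q', hq1, hq2, hq3⟩ := tauHat_lt_iff.1 hlt
        exact ⟨q', hq1, (ENNReal.ofReal_lt_ofReal_iff (lt_of_le_of_lt hq h1)).1 hq2, hq3⟩
      · intro hall
        by_contra hcon
        push_neg at hcon
        rcases eq_or_ne (Tb ω) ∞ with hb | hb
        · obtain ⟨r'', h1, h2⟩ := exists_rat_btwn hqr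
          obtain ⟨q', hq1, hq2, hq3⟩ := hall r'' h1 h2
          have hle : Tb ω ≤ ENNReal.ofReal (q' : ℝ) := sInf_le ⟨q', hq1, rfl, hq3⟩
          rw [hb] at hle
          exact absurd hle (by simp)
        · have hq' : (q : ℝ) < (Tb ω).toReal := by
            have h1 : ENNReal.ofReal (q : ℝ) < Tb ω := hcon
            exact (ENNReal.ofReal_lt_iff_lt_toReal hq hb).1 h1
          obtain ⟨r'', h1, h2⟩ := exists_rat_btwn (lt_min hqr hq')
          obtain ⟨q', hq1, hq2, hq3⟩ := hall r'' h1 (lt_of_lt_of_le h2 (min_le_left _ _))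
          have hle : Tb ω ≤ ENNReal.ofReal (q' : ℝ) := sInf_le ⟨q', hq1, rfl, hq3⟩
          have hlt2 : ENNReal.ofReal (r'' : ℝ) < Tb ω :=
            (ENNReal.ofReal_lt_iff_lt_toReal (by linarith) hb).2
              (lt_of_lt_of_le h2 (min_le_right _ _))
          have : Tb ω < Tb ω :=
            lt_of_le_of_lt (le_trans hle (ENNReal.ofReal_le_ofReal hq2.le)) hlt2
          exact absurd this (lt_irrefl _)
    -- Step B
    have hB : ∀ r' : ℚ, 0 < (r' : ℝ) →
        {ω : CPath E | xiHat w₁ w₂ s ℓ₁ ℓ₂ ω < ENNReal.ofReal (r' : ℝ)} =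
        ⋃ (q : ℚ) (_ : s ≤ (q : ℝ)) (_ : (q : ℝ) < (r' : ℝ)),
          (EvU w₁ s ℓ₁ (q : ℝ) ∩ {ω : CPath E | Tb ω ≤ ENNReal.ofReal (q : ℝ)}ᶜ) := by
      intro r' hr'
      ext ω
      simp only [Set.mem_setOf_eq, Set.mem_iUnion, Set.mem_inter_iff, Set.mem_compl_iff]
      constructor
      · intro hlt
        rw [xiHat] at hlt
        split_ifs at hlt with hif
        · have hmin : Ta ω < min (Tb ω) (ENNReal.ofReal (r' : ℝ)) := lt_min hif hlt
          obtain ⟨q, hq1, hq2, hq3⟩ := tauHat_lt_iff.1 hmin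
          refine ⟨q, hq1, ?_, hq3, ?_⟩
          · exact (ENNReal.ofReal_lt_ofReal_iff hr').1 (lt_of_lt_of_le hq2 (min_le_right _ _))
          · exact not_le.2 (lt_of_lt_of_le hq2 (min_le_left _ _))
        · exact absurd hlt (by simp)
      · rintro ⟨q, hq1, hq2, hq3, hq4⟩
        have hTale : Ta ω ≤ ENNReal.ofReal (q : ℝ) := sInf_le ⟨q, hq1, rfl, hq3⟩
        have hTblt : ENNReal.ofReal (q : ℝ) < Tb ω := not_le.1 hq4
        have hif : Ta ω < Tb ω := lt_of_le_of_lt hTale hTblt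
        rw [xiHat, if_pos hif]
        exact lt_of_le_of_lt hTale ((ENNReal.ofReal_lt_ofReal_iff hr').2 hq2)
    -- Step A
    have hA : {ω : CPath E | xiHat w₁ w₂ s ℓ₁ ℓ₂ ω ≤ t} =
        ⋂ (r' : ℚ) (_ : t.toReal < (r' : ℝ)) (_ : (r' : ℝ) < r),
          {ω : CPath E | xiHat w₁ w₂ s ℓ₁ ℓ₂ ω < ENNReal.ofReal (r' : ℝ)} := by
      ext ω
      simp only [Set.mem_setOf_eq, Set.mem_iInter]
      constructor
      · intro h r' h1 _
        refine lt_of_le_of_lt h ?_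
        rw [show t = ENNReal.ofReal t.toReal from (ENNReal.ofReal_toReal ht).symm]
        exact (ENNReal.ofReal_lt_ofReal_iff (lt_of_le_of_lt ENNReal.toReal_nonneg h1)).2 h1
      · intro hall
        by_contra hcon
        push_neg at hcon
        rcases eq_or_ne (xiHat w₁ w₂ s ℓ₁ ℓ₂ ω) ∞ with hx | hx
        · obtain ⟨r', h1, h2⟩ := exists_rat_btwn hr
          have := hall r' h1 h2
          rw [hx] at this
          exact absurd this (by simp)
        · have h1 : t.toReal < (xiHat w₁ w₂ s ℓ₁ ℓ₂ ω).toReal :=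
            (ENNReal.toReal_lt_toReal ht hx).2 hcon
          obtain ⟨r', h2, h3⟩ := exists_rat_btwn (lt_min hr h1)
          have h4 := hall r' h2 (lt_of_lt_of_le h3 (min_le_left _ _))
          have h5 : ENNReal.ofReal (r' : ℝ) < xiHat w₁ w₂ s ℓ₁ ℓ₂ ω :=
            (ENNReal.ofReal_lt_iff_lt_toReal (le_trans ENNReal.toReal_nonneg h2.le) hx).2
              (lt_of_lt_of_le h3 (min_le_right _ _))
          exact absurd h4 (not_lt.2 h5.le)
    rw [hA]
    refine MeasurableSet.iInter fun r' => MeasurableSet.iInter fun h1 =>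
      MeasurableSet.iInter fun h2 => ?_
    have hr'pos : 0 < (r' : ℝ) := lt_of_le_of_lt ENNReal.toReal_nonneg h1
    rw [hB r' hr'pos]
    refine MeasurableSet.iUnion fun q => MeasurableSet.iUnion fun hq1 =>
      MeasurableSet.iUnion fun hq2 => ?_
    have hq0 : (0:ℝ) ≤ (q : ℝ) := le_trans hs hq1
    have hqr : (q : ℝ) < r := lt_trans hq2 h2
    refine MeasurableSet.inter (EvU_measurable hq1 hqr) ?_
    rw [hC q hq0 hqr]
    refine MeasurableSet.compl
      (MeasurableSet.iInter fun r'' => MeasurableSet.iInter fun hr1 =>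
        MeasurableSet.iInter fun hr2 => MeasurableSet.iUnion fun q' =>
        MeasurableSet.iUnion fun hq1' => MeasurableSet.iUnion fun hq2' => ?_)
    exact EvU_measurable hq1' (lt_trans hq2' hr2)

lemma xiHat_measurable [Fintype E] (w₁ w₂ : Option E → ℝ) {s : ℝ} (hs : 0 ≤ s) (ℓ₁ ℓ₂ : ℝ) :
    Measurable (xiHat (E := E) w₁ w₂ s ℓ₁ ℓ₂) :=
  measurable_of_Iic fun x => Fst_le_pi s x _ (xiHat_isST w₁ w₂ hs ℓ₁ ℓ₂ x)

/-! ### Identification with the genuine exit times on regular paths -/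

lemma tauM_eq_tauP_neg (v : Option E → ℝ) (s ℓ : ℝ) (ω : CPath E) :
    tauM v s ℓ ω = tauP (fun j => -v j) s ℓ ω := by
  rw [tauM, tauP]
  congr 1
  ext t
  constructor
  · rintro ⟨u, h1, h2, h3⟩
    exact ⟨u, h1, h2, by rw [phi_neg]; linarith⟩
  · rintro ⟨u, h1, h2, h3⟩
    rw [phi_neg] at h3
    exact ⟨u, h1, h2, by linarith⟩

lemma xiHat_eq_xiP {v : Option E → ℝ} {W : ℝ} (hW : ∀ j, |v j| ≤ W)
    {s ℓm ℓp : ℝ} (hs : 0 ≤ s) (hℓm : 0 ≤ ℓm) (hℓp : 0 ≤ ℓp) {ω : CPath E} (hreg : Reg s ω) :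
    xiHat v (fun j => -v j) s ℓp ℓm ω = xiP v ℓm ℓp s ω := by
  have hWn : ∀ j, |(fun j => -v j) j| ≤ W := fun j => by simpa [abs_neg] using hW j
  rw [xiHat, xiP, tauHat_eq hW hs hℓp hreg, tauHat_eq hWn hs hℓm hreg,
    ← tauM_eq_tauP_neg]

lemma xiHat_eq_xiM {v : Option E → ℝ} {W : ℝ} (hW : ∀ j, |v j| ≤ W)
    {s ℓm ℓp : ℝ} (hs : 0 ≤ s) (hℓm : 0 ≤ ℓm) (hℓp : 0 ≤ ℓp) {ω : CPath E} (hreg : Reg s ω) :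
    xiHat (fun j => -v j) v s ℓm ℓp ω = xiM v ℓm ℓp s ω := by
  have hWn : ∀ j, |(fun j => -v j) j| ≤ W := fun j => by simpa [abs_neg] using hW j
  rw [xiHat, xiM, tauHat_eq hWn hs hℓm hreg, tauHat_eq hW hs hℓp hreg,
    ← tauM_eq_tauP_neg]

end

end LawBeforeExitAux

/-- (Proposition 3.4: law of the chain before the exit time.) For bounded
`h : Ē → ℝ` with `h(∂) = 0`, with `k^±(t,j) = 1_{[0,T]}(t) 𝔼_{t,j}[h(X_T)]` on `X̄_±`:
`𝔼_{s,i}[h(X_T) 1_{τ_{ℓ⁻}⁻(s) ∧ τ_{ℓ⁺}⁺(s) ≤ T}] = (Ξ⁺_{ℓ⁻,ℓ⁺} k⁺)(s,i) + (Ξ⁻_{ℓ⁻,ℓ⁺} k⁻)(s,i)`. -/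
theorem law_before_exit_time
    {E : Type*} [Fintype E] (hcard : 1 < Fintype.card E) (v : Option E → ℝ)
    (hv : ∀ e : E, v (some e) ≠ 0) (hv0 : v none = 0)
    (hEp : ∃ e : E, 0 < v (some e)) (hEm : ∃ e : E, v (some e) < 0)
    (M : MarkovFamily E v)
    (h : Option E → ℝ) (hbdd : ∃ C, ∀ j, |h j| ≤ C) (h0 : h none = 0)
    (T : ℝ) (hT : 0 ≤ T)
    (ℓm ℓp : ℝ) (hℓm : 0 ≤ ℓm) (hℓp : 0 ≤ ℓp) (s : ℝ) (hs : 0 ≤ s) (i : E) :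
    ∫ ω, Set.indicator {ω' : CPath E |
          min (tauM v s ℓm ω') (tauP v s ℓp ω') ≤ ENNReal.ofReal T}
        (fun ω' => h (ω' T)) ω ∂ M.P s (some i)
      = opXiP M.P v ℓm ℓp (restrP v (kFun M.P h T)) s (some i)
        + opXiM M.P v ℓm ℓp (restrM v (kFun M.P h T)) s (some i) := by
  classical
  -- uniform bound on v
  obtain ⟨W, hW0, hW⟩ : ∃ W, 0 ≤ W ∧ ∀ j : Option E, |v j| ≤ W := by
    refine ⟨(Finset.univ : Finset (Option E)).sup' ⟨none, Finset.mem_univ _⟩ fun j => |v j|,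
      le_trans (abs_nonneg _)
        (Finset.le_sup' (fun j : Option E => |v j|) (Finset.mem_univ none)),
      fun j => Finset.le_sup' (fun j : Option E => |v j|) (Finset.mem_univ j)⟩
  obtain ⟨C, hC⟩ := hbdd
  have hC0 : 0 ≤ C := le_trans (abs_nonneg _) (hC none)
  set P := M.P s (some i) with hP
  haveI : IsProbabilityMeasure P := M.prob s (some i)
  set vneg : Option E → ℝ := fun j => -v j with hvneg
  have hWn : ∀ j, |vneg j| ≤ W := fun j => by simpa [hvneg, abs_neg] using hW j
  -- the hatted exit times
  set ξp := xiHat (E := E) v vneg s ℓp ℓm with hξpdef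
  set ξm := xiHat (E := E) vneg v s ℓm ℓp with hξmdef
  have hSTp : IsST s ξp := xiHat_isST v vneg hs ℓp ℓm
  have hSTm : IsST s ξm := xiHat_isST vneg v hs ℓm ℓp
  have hmp : Measurable ξp := xiHat_measurable v vneg hs ℓp ℓm
  have hmm : Measurable ξm := xiHat_measurable vneg v hs ℓm ℓp
  have hreg : ∀ᵐ ω ∂P, Reg s ω := (M.pathReg s (some i) hs).mono fun ω hh => hh.1
  -- the future observable G
  set G : ℝ≥0∞ → CPath E → ℝ := fun t ω => if t ≠ ∞ ∧ t.toReal ≤ T then h (ω T) else 0 with hG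
  have hGm : Measurable (Function.uncurry G) := by
    have hset : MeasurableSet {p : ℝ≥0∞ × CPath E | p.1 ≠ ∞ ∧ p.1.toReal ≤ T} := by
      have h1 : MeasurableSet {t : ℝ≥0∞ | t ≠ ∞ ∧ t.toReal ≤ T} :=
        (measurableSet_singleton ∞).compl.inter (ENNReal.measurable_toReal measurableSet_Iic)
      exact measurable_fst h1
    have heq : Function.uncurry G = fun p : ℝ≥0∞ × CPath E =>
        if p.1 ≠ ∞ ∧ p.1.toReal ≤ T then h (p.2 T) else 0 := rfl
    rw [heq]
    exact Measurable.ite hset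
      ((measurable_of_option h).comp ((measurable_pi_apply T).comp measurable_snd))
      measurable_const
  have hGbdd : ∀ t ω, |G t ω| ≤ C := by
    intro t ω
    rw [hG]
    dsimp only
    split_ifs
    · exact hC _
    · simpa using hC0
  have hGfut : ∀ (t : ℝ) (ω ω' : CPath E), (∀ u, t ≤ u → ω u = ω' u) →
      G (ENNReal.ofReal t) ω = G (ENNReal.ofReal t) ω' := by
    intro t ω ω' hag
    rw [hG]
    dsimp only
    split_ifs with hcond
    · have h1 : t ≤ (ENNReal.ofReal t).toReal := by
        rw [ENNReal.toReal_ofReal']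
        exact le_max_left _ _
      exact congrArg h (hag T (le_trans h1 hcond.2))
    · rfl
  -- indicator integrands
  set fp : CPath E → ℝ :=
    fun ω => Set.indicator {ω' : CPath E | ξp ω' ≠ ∞} (fun ω' => G (ξp ω') ω') ω with hfp
  set fm : CPath E → ℝ :=
    fun ω => Set.indicator {ω' : CPath E | ξm ω' ≠ ∞} (fun ω' => G (ξm ω') ω') ω with hfm
  have hfpmeas : Measurable fp := by
    have h1 : Measurable fun ω => G (ξp ω) ω := hGm.comp (hmp.prodMk measurable_id)
    have h2 : MeasurableSet {ω : CPath E | ξp ω ≠ ∞} :=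
      (hmp (measurableSet_singleton ∞)).compl
    exact h1.indicator h2
  have hfmmeas : Measurable fm := by
    have h1 : Measurable fun ω => G (ξm ω) ω := hGm.comp (hmm.prodMk measurable_id)
    have h2 : MeasurableSet {ω : CPath E | ξm ω ≠ ∞} :=
      (hmm (measurableSet_singleton ∞)).compl
    exact h1.indicator h2
  have hindbd : ∀ (ξ : CPath E → ℝ≥0∞) (ω : CPath E),
      |Set.indicator {ω' : CPath E | ξ ω' ≠ ∞} (fun ω' => G (ξ ω') ω') ω| ≤ C := by
    intro ξ ω
    by_cases hω : ω ∈ {ω' : CPath E | ξ ω' ≠ ∞}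
    · rw [Set.indicator_of_mem hω]
      exact hGbdd _ _
    · rw [Set.indicator_of_notMem hω]
      simpa using hC0
  have hfpi : MeasureTheory.Integrable fp P :=
    MeasureTheory.Integrable.mono' (MeasureTheory.integrable_const C)
      hfpmeas.aestronglyMeasurable
      (MeasureTheory.ae_of_all _ fun ω => by rw [Real.norm_eq_abs, hfp]; exact hindbd ξp ω)
  have hfmi : MeasureTheory.Integrable fm P :=
    MeasureTheory.Integrable.mono' (MeasureTheory.integrable_const C)
      hfmmeas.aestronglyMeasurable
      (MeasureTheory.ae_of_all _ fun ω => by rw [Real.norm_eq_abs, hfm]; exact hindbd ξm ω)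
  -- strong Markov property applied at ξp and ξm
  have hgep : ∀ ω, ENNReal.ofReal s ≤ ξp ω := fun ω => xiHat_lower v vneg s ℓp ℓm ω
  have hgem : ∀ ω, ENNReal.ofReal s ≤ ξm ω := fun ω => xiHat_lower vneg v s ℓm ℓp ω
  have hSMp := M.strongMarkov s (some i) hs ξp hSTp hgep G hGm ⟨C, hGbdd⟩ hGfut
  have hSMm := M.strongMarkov s (some i) hs ξm hSTm hgem G hGm ⟨C, hGbdd⟩ hGfut
  have hlep := stoppedSigma_le_pi hSTp
  have hlem := stoppedSigma_le_pi hSTm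
  haveI : MeasureTheory.SigmaFinite (P.trim hlep) := by
    haveI : MeasureTheory.IsFiniteMeasure (P.trim hlep) :=
      MeasureTheory.isFiniteMeasure_trim hlep
    infer_instance
  haveI : MeasureTheory.SigmaFinite (P.trim hlem) := by
    haveI : MeasureTheory.IsFiniteMeasure (P.trim hlem) :=
      MeasureTheory.isFiniteMeasure_trim hlem
    infer_instance
  have hintp : ∫ ω, fp ω ∂P = ∫ ω, Set.indicator {ω' : CPath E | ξp ω' ≠ ∞}
      (fun ω' => ∫ ω'', G (ξp ω') ω'' ∂ M.P (ξp ω').toReal (ω' (ξp ω').toReal)) ω ∂P :=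
    (MeasureTheory.integral_condExp hlep).symm.trans (MeasureTheory.integral_congr_ae hSMp)
  have hintm : ∫ ω, fm ω ∂P = ∫ ω, Set.indicator {ω' : CPath E | ξm ω' ≠ ∞}
      (fun ω' => ∫ ω'', G (ξm ω') ω'' ∂ M.P (ξm ω').toReal (ω' (ξm ω').toReal)) ω ∂P :=
    (MeasureTheory.integral_condExp hlem).symm.trans (MeasureTheory.integral_congr_ae hSMm)
  -- pointwise identification on regular paths
  have hE1 : (fun ω => Set.indicator {ω' : CPath E |
        min (tauM v s ℓm ω') (tauP v s ℓp ω') ≤ ENNReal.ofReal T}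
        (fun ω' => h (ω' T)) ω) =ᵐ[P] fun ω => fp ω + fm ω := by
    filter_upwards [hreg] with ω hre
    have hxp : ξp ω = xiP v ℓm ℓp s ω := xiHat_eq_xiP hW hs hℓm hℓp hre
    have hxm : ξm ω = xiM v ℓm ℓp s ω := xiHat_eq_xiM hW hs hℓm hℓp hre
    have hfpω : fp ω = Set.indicator {ω' : CPath E | ξp ω' ≠ ∞} (fun ω' => G (ξp ω') ω') ω := rfl
    have hfmω : fm ω = Set.indicator {ω' : CPath E | ξm ω' ≠ ∞} (fun ω' => G (ξm ω') ω') ω := rfl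
    rcases lt_trichotomy (tauP v s ℓp ω) (tauM v s ℓm ω) with hAB | hAB | hAB
    · -- τ⁺ < τ⁻
      have hAne : tauP v s ℓp ω ≠ ∞ := hAB.ne_top
      have hxpA : ξp ω = tauP v s ℓp ω := by rw [hxp, xiP, if_pos hAB]
      have hxmI : ξm ω = ∞ := by rw [hxm, xiM, if_neg (not_lt.2 hAB.le)]
      have hfm0 : fm ω = 0 := by
        rw [hfmω, Set.indicator_of_notMem (by simp [hxmI])]
      by_cases hAT : tauP v s ℓp ω ≤ ENNReal.ofReal T
      · have hmin : ω ∈ {ω' : CPath E |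
            min (tauM v s ℓm ω') (tauP v s ℓp ω') ≤ ENNReal.ofReal T} :=
          le_trans (min_le_right _ _) hAT
        rw [Set.indicator_of_mem hmin, hfm0, add_zero, hfpω,
          Set.indicator_of_mem (show ω ∈ {ω' : CPath E | ξp ω' ≠ ∞} by
            simp only [Set.mem_setOf_eq, hxpA]; exact hAne),
          hxpA, hG]
        dsimp only
        rw [if_pos ⟨hAne, ENNReal.toReal_le_of_le_ofReal hT hAT⟩]
      · have hmin : ω ∉ {ω' : CPath E |
            min (tauM v s ℓm ω') (tauP v s ℓp ω') ≤ ENNReal.ofReal T} := by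
          simp only [Set.mem_setOf_eq, min_eq_right hAB.le]
          exact hAT
        rw [Set.indicator_of_notMem hmin, hfm0, add_zero, hfpω,
          Set.indicator_of_mem (show ω ∈ {ω' : CPath E | ξp ω' ≠ ∞} by
            simp only [Set.mem_setOf_eq, hxpA]; exact hAne),
          hxpA, hG]
        dsimp only
        rw [if_neg]
        rintro ⟨-, h2⟩
        push_neg at hAT
        exact absurd h2 (not_le.2 ((ENNReal.ofReal_lt_iff_lt_toReal hT hAne).1 hAT))
    · -- tie: impossible below T, both ξ are ∞
      have hxpI : ξp ω = ∞ := by rw [hxp, xiP, if_neg (by rw [hAB]; exact lt_irrefl _)]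
      have hxmI : ξm ω = ∞ := by rw [hxm, xiM, if_neg (by rw [hAB]; exact lt_irrefl _)]
      have hfp0 : fp ω = 0 := by rw [hfpω, Set.indicator_of_notMem (by simp [hxpI])]
      have hfm0 : fm ω = 0 := by rw [hfmω, Set.indicator_of_notMem (by simp [hxmI])]
      have hmin : ω ∉ {ω' : CPath E |
          min (tauM v s ℓm ω') (tauP v s ℓp ω') ≤ ENNReal.ofReal T} := by
        simp only [Set.mem_setOf_eq]
        intro hcon
        have hAne : tauP v s ℓp ω ≠ ∞ := by
          intro hcc
          rw [hcc, ← hAB, hcc, min_self] at hcon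
          exact absurd (lt_of_le_of_lt hcon ENNReal.ofReal_lt_top) (lt_irrefl _)
        have hBne : tauP vneg s ℓm ω ≠ ∞ := by
          rw [← tauM_eq_tauP_neg, ← hAB]
          exact hAne
        obtain ⟨-, hs1⟩ := crossing_sign_pos hW hs hℓp hre hAne
        obtain ⟨-, hs2⟩ := crossing_sign_pos hWn hs hℓm hre hBne
        have heq : (tauP vneg s ℓm ω).toReal = (tauP v s ℓp ω).toReal := by
          rw [← tauM_eq_tauP_neg, ← hAB]
        rw [heq] at hs2
        rw [hvneg] at hs2
        dsimp only at hs2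
        linarith
      rw [Set.indicator_of_notMem hmin, hfp0, hfm0, add_zero]
    · -- τ⁻ < τ⁺
      have hBne : tauM v s ℓm ω ≠ ∞ := hAB.ne_top
      have hxmB : ξm ω = tauM v s ℓm ω := by rw [hxm, xiM, if_pos hAB]
      have hxpI : ξp ω = ∞ := by rw [hxp, xiP, if_neg (not_lt.2 hAB.le)]
      have hfp0 : fp ω = 0 := by
        rw [hfpω, Set.indicator_of_notMem (by simp [hxpI])]
      by_cases hBT : tauM v s ℓm ω ≤ ENNReal.ofReal T
      · have hmin : ω ∈ {ω' : CPath E |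
            min (tauM v s ℓm ω') (tauP v s ℓp ω') ≤ ENNReal.ofReal T} :=
          le_trans (min_le_left _ _) hBT
        rw [Set.indicator_of_mem hmin, hfp0, zero_add, hfmω,
          Set.indicator_of_mem (show ω ∈ {ω' : CPath E | ξm ω' ≠ ∞} by
            simp only [Set.mem_setOf_eq, hxmB]; exact hBne),
          hxmB, hG]
        dsimp only
        rw [if_pos ⟨hBne, ENNReal.toReal_le_of_le_ofReal hT hBT⟩]
      · have hmin : ω ∉ {ω' : CPath E |
            min (tauM v s ℓm ω') (tauP v s ℓp ω') ≤ ENNReal.ofReal T} := by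
          simp only [Set.mem_setOf_eq, min_eq_left hAB.le]
          exact hBT
        rw [Set.indicator_of_notMem hmin, hfp0, zero_add, hfmω,
          Set.indicator_of_mem (show ω ∈ {ω' : CPath E | ξm ω' ≠ ∞} by
            simp only [Set.mem_setOf_eq, hxmB]; exact hBne),
          hxmB, hG]
        dsimp only
        rw [if_neg]
        rintro ⟨-, h2⟩
        push_neg at hBT
        exact absurd h2 (not_le.2 ((ENNReal.ofReal_lt_iff_lt_toReal hT hBne).1 hBT))
  have hE2 : (fun ω => Set.indicator {ω' : CPath E | ξp ω' ≠ ∞}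
      (fun ω' => ∫ ω'', G (ξp ω') ω'' ∂ M.P (ξp ω').toReal (ω' (ξp ω').toReal)) ω)
      =ᵐ[P] fun ω => restrP v (kFun M.P h T) (xiP v ℓm ℓp s ω) (Xat (xiP v ℓm ℓp s ω) ω) := by
    filter_upwards [hreg] with ω hre
    have hxp : ξp ω = xiP v ℓm ℓp s ω := xiHat_eq_xiP hW hs hℓm hℓp hre
    by_cases hx : xiP v ℓm ℓp s ω = ∞
    · rw [Set.indicator_of_notMem (by simp [hxp, hx]), hx]
      rw [show Xat (∞ : ℝ≥0∞) ω = none from if_pos rfl]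
      rfl
    · have hAB : tauP v s ℓp ω < tauM v s ℓm ω := by
        by_contra hcon
        rw [xiP, if_neg hcon] at hx
        exact hx rfl
      have hxA : xiP v ℓm ℓp s ω = tauP v s ℓp ω := by rw [xiP, if_pos hAB]
      have hAne : tauP v s ℓp ω ≠ ∞ := by rw [← hxA]; exact hx
      obtain ⟨hts, hsign⟩ := crossing_sign_pos hW hs hℓp hre hAne
      rcases hj : ω ((tauP v s ℓp ω).toReal) with _ | e
      · rw [hj, hv0] at hsign
        exact absurd hsign (lt_irrefl 0)
      · rw [Set.indicator_of_mem (show ω ∈ {ω' : CPath E | ξp ω' ≠ ∞} by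
          simp only [Set.mem_setOf_eq, hxp]; exact hx)]
        rw [hxp, hxA]
        rw [show Xat (tauP v s ℓp ω) ω = ω ((tauP v s ℓp ω).toReal) from if_neg hAne]
        rw [hj]
        show _ = if 0 < v (some e) ∧ tauP v s ℓp ω ≠ ∞
          then kFun M.P h T (tauP v s ℓp ω) (some e) else 0
        rw [if_pos ⟨hj ▸ hsign, hAne⟩, kFun]
        by_cases hcond : tauP v s ℓp ω ≠ ∞ ∧ (tauP v s ℓp ω).toReal ≤ T
        · rw [if_pos hcond]
          have hGeq : (fun ω'' : CPath E => G (tauP v s ℓp ω) ω'') =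
              fun ω'' : CPath E => h (ω'' T) := by
            funext ω''
            rw [hG]
            dsimp only
            rw [if_pos hcond]
          rw [hGeq]
        · rw [if_neg hcond]
          have hGeq : (fun ω'' : CPath E => G (tauP v s ℓp ω) ω'') =
              fun _ : CPath E => (0:ℝ) := by
            funext ω''
            rw [hG]
            dsimp only
            rw [if_neg hcond]
          rw [hGeq, MeasureTheory.integral_zero]
  have hE3 : (fun ω => Set.indicator {ω' : CPath E | ξm ω' ≠ ∞}
      (fun ω' => ∫ ω'', G (ξm ω') ω'' ∂ M.P (ξm ω').toReal (ω' (ξm ω').toReal)) ω)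
      =ᵐ[P] fun ω => restrM v (kFun M.P h T) (xiM v ℓm ℓp s ω) (Xat (xiM v ℓm ℓp s ω) ω) := by
    filter_upwards [hreg] with ω hre
    have hxm : ξm ω = xiM v ℓm ℓp s ω := xiHat_eq_xiM hW hs hℓm hℓp hre
    by_cases hx : xiM v ℓm ℓp s ω = ∞
    · rw [Set.indicator_of_notMem (by simp [hxm, hx]), hx]
      rw [show Xat (∞ : ℝ≥0∞) ω = none from if_pos rfl]
      rfl
    · have hAB : tauM v s ℓm ω < tauP v s ℓp ω := by
        by_contra hcon
        rw [xiM, if_neg hcon] at hx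
        exact hx rfl
      have hxB : xiM v ℓm ℓp s ω = tauM v s ℓm ω := by rw [xiM, if_pos hAB]
      have hBne : tauM v s ℓm ω ≠ ∞ := by rw [← hxB]; exact hx
      have hBne' : tauP vneg s ℓm ω ≠ ∞ := by rw [← tauM_eq_tauP_neg]; exact hBne
      obtain ⟨hts, hsign⟩ := crossing_sign_pos hWn hs hℓm hre hBne'
      have htoeq : (tauP vneg s ℓm ω).toReal = (tauM v s ℓm ω).toReal := by
        rw [← tauM_eq_tauP_neg]
      rw [htoeq] at hsign
      rcases hj : ω ((tauM v s ℓm ω).toReal) with _ | e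
      · rw [hj, hvneg] at hsign
        dsimp only at hsign
        rw [hv0] at hsign
        simp at hsign
      · have hvelt : v (some e) < 0 := by
          rw [hj, hvneg] at hsign
          dsimp only at hsign
          linarith
        rw [Set.indicator_of_mem (show ω ∈ {ω' : CPath E | ξm ω' ≠ ∞} by
          simp only [Set.mem_setOf_eq, hxm]; exact hx)]
        rw [hxm, hxB]
        rw [show Xat (tauM v s ℓm ω) ω = ω ((tauM v s ℓm ω).toReal) from if_neg hBne]
        rw [hj]
        show _ = if v (some e) < 0 ∧ tauM v s ℓm ω ≠ ∞
          then kFun M.P h T (tauM v s ℓm ω) (some e) else 0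
        rw [if_pos ⟨hvelt, hBne⟩, kFun]
        by_cases hcond : tauM v s ℓm ω ≠ ∞ ∧ (tauM v s ℓm ω).toReal ≤ T
        · rw [if_pos hcond]
          have hGeq : (fun ω'' : CPath E => G (tauM v s ℓm ω) ω'') =
              fun ω'' : CPath E => h (ω'' T) := by
            funext ω''
            rw [hG]
            dsimp only
            rw [if_pos hcond]
          rw [hGeq]
        · rw [if_neg hcond]
          have hGeq : (fun ω'' : CPath E => G (tauM v s ℓm ω) ω'') =
              fun _ : CPath E => (0:ℝ) := by
            funext ω''
            rw [hG]
            dsimp only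
            rw [if_neg hcond]
          rw [hGeq, MeasureTheory.integral_zero]
  -- assemble
  calc
    ∫ ω, Set.indicator {ω' : CPath E |
          min (tauM v s ℓm ω') (tauP v s ℓp ω') ≤ ENNReal.ofReal T}
        (fun ω' => h (ω' T)) ω ∂ M.P s (some i)
        = ∫ ω, (fp ω + fm ω) ∂P := MeasureTheory.integral_congr_ae hE1
    _ = ∫ ω, fp ω ∂P + ∫ ω, fm ω ∂P := MeasureTheory.integral_add hfpi hfmi
    _ = opXiP M.P v ℓm ℓp (restrP v (kFun M.P h T)) s (some i)
        + opXiM M.P v ℓm ℓp (restrM v (kFun M.P h T)) s (some i) := by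
      rw [hintp, hintm, opXiP, opXiM]
      exact congrArg₂ (· + ·) (MeasureTheory.integral_congr_ae hE2)
        (MeasureTheory.integral_congr_ae hE3)
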